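/- For all α, β, γ > 0, the vector χ = (1/(2(α+β+γ))) (X, −X, Y, −Y), where X = (β−γ)/(2β) − (γ+β)²/(2αβ) and Y = −(α+β+γ)/(2β), is the unique vector in ℝ⁴ whose components sum to zero and which satisfies Q(α,β,γ) χ = Λ 𝓔; moreover the resulting diffusion coefficient D := −(χ₁ − χ₂ + χ₃ − χ₄) equals (α² + 2αγ + (γ+β)²)/(2αβ(α+β+γ)). -/

import Mathlib

/-- For all `α, β, γ > 0`, the vector
`χ = (1/(2(α+β+γ))) (X, −X, Y, −Y)`, with `X = (β−γ)/(2β) − (γ+β)²/(2αβ)` and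
`Y = −(α+β+γ)/(2β)`, is the unique vector in `ℝ⁴` whose components sum to zero and which
satisfies `Q(α,β,γ) χ = Λ 𝓔` (with `Λ = diag(1,−1,1,−1)`); the resulting diffusion
coefficient `D = −(χ₁ − χ₂ + χ₃ − χ₄)` equals `(α² + 2αγ + (γ+β)²)/(2αβ(α+β+γ))`. -/
theorem ncs2_chi_and_diffusion (α β γ : ℝ) (hα : 0 < α) (hβ : 0 < β) (hγ : 0 < γ) :
    let Q : Matrix (Fin 4) (Fin 4) ℝ :=
      !![-α, 0, γ, β;
         0, -α, β, γ;
         α, 0, -(β + γ), 0;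
         0, α, 0, -(β + γ)]
    let 𝓔 : Fin 4 → ℝ := (2 * (α + β + γ))⁻¹ • ![β + γ, β + γ, α, α]
    let Λ𝓔 : Fin 4 → ℝ := ![𝓔 0, -𝓔 1, 𝓔 2, -𝓔 3]
    let X : ℝ := (β - γ) / (2 * β) - (γ + β) ^ 2 / (2 * α * β)
    let Y : ℝ := -((α + β + γ) / (2 * β))
    let χ : Fin 4 → ℝ := (2 * (α + β + γ))⁻¹ • ![X, -X, Y, -Y]
    (χ 0 + χ 1 + χ 2 + χ 3 = 0) ∧
    Q.mulVec χ = Λ𝓔 ∧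
    (∀ y : Fin 4 → ℝ, y 0 + y 1 + y 2 + y 3 = 0 → Q.mulVec y = Λ𝓔 → y = χ) ∧
    -(χ 0 - χ 1 + χ 2 - χ 3)
      = (α ^ 2 + 2 * α * γ + (γ + β) ^ 2) / (2 * α * β * (α + β + γ)) := by
  intro Q 𝓔 Λ𝓔 X Y χ
  have hs : α + β + γ ≠ 0 := by positivity
  have hα' : α ≠ 0 := hα.ne'
  have hβ' : β ≠ 0 := hβ.ne'
  refine ⟨?_, ?_, ?_, ?_⟩
  · simp only [χ, X, Y, Pi.smul_apply, Matrix.cons_val_zero, Matrix.cons_val_one,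
      Matrix.head_cons, Matrix.cons_val_two, Matrix.tail_cons, Matrix.cons_val_three,
      smul_eq_mul]
    ring
  · funext i
    fin_cases i <;>
      simp [Q, χ, Λ𝓔, 𝓔, X, Y, Matrix.mulVec, dotProduct, Fin.sum_univ_four] <;>
      field_simp <;> ring
  · intro y hsum hQ
    have e0 := congrFun hQ 0
    have e1 := congrFun hQ 1
    have e2 := congrFun hQ 2
    have e3 := congrFun hQ 3
    simp [Q, Λ𝓔, 𝓔, Matrix.mulVec, dotProduct, Fin.sum_univ_four] at e0 e1 e2 e3
    field_simp at e0 e1 e2 e3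
    -- e0 : (-(α * y 0) + γ * y 2 + β * y 3) * ((α + β + γ) * 2) = β + γ
    -- e1 : (-(α * y 1) + β * y 2 + γ * y 3) * ((α + β + γ) * 2) = -γ + -β
    -- e2 : (α * y 0 + (-γ + -β) * y 2) * ((α + β + γ) * 2) = α
    -- e3 : (α * y 1 + (-γ + -β) * y 3) * ((α + β + γ) * 2) = -α
    have h23 : y 2 + y 3 = 0 := by
      have h : (α + β + γ) ^ 2 * (y 2 + y 3) = 0 := by
        linear_combination (e0 + e1) / 2 + α * (α + β + γ) * hsum
      have := mul_eq_zero.mp h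
      rcases this with h' | h'
      · exact absurd h' (pow_ne_zero 2 hs)
      · exact h'
    have h2full : 4 * β * (α + β + γ) * y 2 = -(α + β + γ) := by
      linear_combination -e0 - e2 + 2 * β * (α + β + γ) * h23
    have hy2 : y 2 = -(1 / (4 * β)) := by
      have h : (α + β + γ) * (4 * β * y 2 + 1) = 0 := by linear_combination h2full
      rcases mul_eq_zero.mp h with h' | h'
      · exact absurd h' hs
      · field_simp
        linarith
    have hy3 : y 3 = 1 / (4 * β) := by
      rw [hy2] at h23; linarith
    have hy0 : y 0 = (α * (β - γ) - (β + γ) ^ 2) / (4 * α * β * (α + β + γ)) := by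
      have h0 : 4 * α * β * (α + β + γ) * y 0 = 2 * α * β - (β + γ) * (α + β + γ) := by
        linear_combination 2 * β * e2 + (β + γ) * h2full
      field_simp
      linear_combination h0
    have hy1 : y 1 = -(y 0 + y 2 + y 3) := by linarith
    funext i
    fin_cases i
    · show y 0 = χ 0
      simp only [χ, X, Y, Pi.smul_apply, Matrix.cons_val_zero, smul_eq_mul]
      rw [hy0]; field_simp; ring
    · show y 1 = χ 1
      simp only [χ, X, Y, Pi.smul_apply, Matrix.cons_val_one, Matrix.head_cons, Matrix.cons_val_zero, smul_eq_mul]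
      rw [hy1, hy0, hy2, hy3]; field_simp; ring
    · show y 2 = χ 2
      simp only [χ, X, Y, Pi.smul_apply, Matrix.cons_val_two, Matrix.tail_cons,
        Matrix.head_cons, smul_eq_mul]
      rw [hy2]; field_simp; ring
    · show y 3 = χ 3
      simp only [χ, X, Y, Pi.smul_apply, Matrix.cons_val_three, Matrix.tail_cons,
        Matrix.head_cons, smul_eq_mul]
      rw [hy3]; field_simp; ring
  · simp only [χ, X, Y, Pi.smul_apply, Matrix.cons_val_zero, Matrix.cons_val_one,
      Matrix.head_cons, Matrix.cons_val_two, Matrix.tail_cons, Matrix.cons_val_three,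
      smul_eq_mul]
    field_simp
    ring
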